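/- Let p be a prime and 1 ≤ m ≤ n ≤ p−1. If m ≠ p−1 or n ≠ p−1, then diam(D(p; m, n)) ≤ 2p − 2. -/

import Mathlib

/-- `walkLen r k x y` means there is a directed walk of length exactly `k`
from `x` to `y` in the digraph with arc relation `r`. -/
def walkLen {V : Type*} (r : V → V → Prop) : ℕ → V → V → Prop
  | 0 => fun x y => x = y
  | k + 1 => fun x y => ∃ z, r x z ∧ walkLen r k z y

/-- The distance from `x` to `y`: the minimum length of a directed walk,
`⊤` if `y` is not reachable from `x`. -/
noncomputable def ddist {V : Type*} (r : V → V → Prop) (x y : V) : ℕ∞ :=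
  ⨅ n ∈ {n : ℕ | walkLen r n x y}, (n : ℕ∞)

/-- The diameter of the digraph: the maximum of distances over all ordered pairs. -/
noncomputable def ddiam {V : Type*} (r : V → V → Prop) : ℕ∞ :=
  ⨆ x, ⨆ y, ddist r x y

/-- A digraph is strong if every vertex is reachable from every vertex. -/
def IsStrongDigraph {V : Type*} (r : V → V → Prop) : Prop :=
  ∀ x y : V, ∃ n : ℕ, walkLen r n x y

/-- The arc relation of the monomial digraph `D(q; m, n)`:
`(x₁, x₂) → (y₁, y₂)` iff `x₂ + y₂ = x₁ ^ m * y₁ ^ n`. -/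
def monomialArc {F : Type*} [Field F] (m n : ℕ) (x y : F × F) : Prop :=
  x.2 + y.2 = x.1 ^ m * y.1 ^ n


section General
variable {V : Type*} {r : V → V → Prop}

lemma walkLen_zero {x y : V} : walkLen r 0 x y ↔ x = y := Iff.rfl

lemma walkLen_succ {k : ℕ} {x y : V} :
    walkLen r (k+1) x y ↔ ∃ z, r x z ∧ walkLen r k z y := Iff.rfl

lemma walkLen_trans : ∀ {j k : ℕ} {x y z : V},
    walkLen r j x y → walkLen r k y z → walkLen r (j + k) x z
  | 0, k, x, y, z, hxy, hyz => by rwa [walkLen_zero.mp hxy, Nat.zero_add]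
  | j+1, k, x, y, z, ⟨w, hw, hrest⟩, hyz => by
    rw [Nat.succ_add]
    exact ⟨w, hw, walkLen_trans hrest hyz⟩

instance walkLenDec [Fintype V] [DecidableEq V] (r : V → V → Prop) [DecidableRel r] :
    ∀ (k : ℕ) (x y : V), Decidable (walkLen r k x y)
  | 0, x, y => decidable_of_iff (x = y) Iff.rfl
  | k+1, x, y =>
    haveI : ∀ z, Decidable (walkLen r k z y) := fun z => walkLenDec r k z y
    decidable_of_iff (∃ z, r x z ∧ walkLen r k z y) Iff.rfl

lemma ddiam_le {C : ℕ} (h : ∀ x y : V, ∃ k, k ≤ C ∧ walkLen r k x y) :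
    ddiam r ≤ (C : ℕ∞) := by
  refine iSup_le fun x => iSup_le fun y => ?_
  obtain ⟨k, hk, hw⟩ := h x y
  exact le_trans (iInf₂_le k hw) (by exact_mod_cast hk)

end General

instance monomialArcDec {F : Type*} [Field F] [DecidableEq F] (m n : ℕ) :
    DecidableRel (monomialArc (F := F) m n) := fun x y => by
  unfold monomialArc; infer_instance

lemma walk_map {K F : Type*} [Field K] [Field F] (e : K ≃+* F) (m n : ℕ) :
    ∀ (k : ℕ) (x y : K × K), walkLen (monomialArc m n) k x y →
      walkLen (monomialArc m n) k (e x.1, e x.2) (e y.1, e y.2)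
  | 0, x, y, hw => by rw [walkLen_zero] at hw ⊢; rw [hw]
  | k+1, x, y, ⟨z, hz, hw⟩ =>
    ⟨(e z.1, e z.2), by
      have := congrArg e hz
      simpa [monomialArc, map_add, map_mul, map_pow] using this,
      walk_map e m n k z y hw⟩

open Finset Pointwise

section Walks
variable {K : Type*} [Field K] {m n : ℕ}

lemma arc_mk {a s c w : K} (h : s + w = a ^ m * c ^ n) : monomialArc m n (a, s) (c, w) := h

lemma walkA4 (hm0 : m ≠ 0) (hn0 : n ≠ 0) (s t v : K) :
    walkLen (monomialArc m n) 4 (1, s) (1, s + (v ^ m - t ^ n)) := by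
  refine ⟨(t, t ^ n - s), arc_mk (by ring), (0, s - t ^ n),
    arc_mk (by rw [zero_pow hn0]; ring), (v, t ^ n - s),
    arc_mk (by rw [zero_pow hm0]; ring), (1, s + (v ^ m - t ^ n)),
    arc_mk (by rw [one_pow]; ring), rfl⟩

lemma walkA_chain (hm0 : m ≠ 0) (hn0 : n ≠ 0) :
    ∀ (l : List (K × K)) (s : K),
      walkLen (monomialArc m n) (4 * l.length) (1, s)
        (1, s + (l.map fun q => q.1 ^ m - q.2 ^ n).sum)
  | [], s => by
    simp only [List.map_nil, List.sum_nil, add_zero, List.length_nil, Nat.mul_zero]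
    exact rfl
  | (v, t) :: rest, s => by
    have h1 := walkA4 (K := K) hm0 hn0 s t v
    have h2 := walkA_chain hm0 hn0 rest (s + (v ^ m - t ^ n))
    have h3 := walkLen_trans h1 h2
    have hlen : 4 + 4 * rest.length = 4 * ((v,t) :: rest).length := by
      simp [List.length_cons]; ring
    rw [hlen] at h3
    simpa [add_assoc] using h3

lemma walkA_start (x1 x2 : K) :
    walkLen (monomialArc m n) 1 (x1, x2) (1, x1 ^ m - x2) :=
  ⟨(1, x1 ^ m - x2), arc_mk (by rw [one_pow]; ring), rfl⟩

lemma walkA_end (s b1 : K) :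
    walkLen (monomialArc m n) 1 (1, s) (b1, b1 ^ n - s) :=
  ⟨(b1, b1 ^ n - s), arc_mk (by rw [one_pow]; ring), rfl⟩

lemma walkB2 (hn1 : ∀ u : K, u ≠ 0 → u ^ n = 1) {u v : K} (hu : u ≠ 0) (hv : v ≠ 0)
    (w s : K) : walkLen (monomialArc m n) 2 (w, s) (v, s + (u ^ m - w ^ m)) :=
  ⟨(u, w ^ m - s), arc_mk (by rw [hn1 u hu]; ring),
   (v, s + (u ^ m - w ^ m)), arc_mk (by rw [hn1 v hv]; ring), rfl⟩

def chainSum (m : ℕ) : K → List (K × K) → K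
  | _, [] => 0
  | w, (u, _v) :: rest => (u ^ m - w ^ m) + chainSum m (Prod.snd ((u, _v) : K × K)) rest

lemma walkB_chain (hn1 : ∀ u : K, u ≠ 0 → u ^ n = 1) :
    ∀ (l : List (K × K)), (∀ q ∈ l, q.1 ≠ 0 ∧ q.2 ≠ 0) → ∀ (w s : K),
      walkLen (monomialArc m n) (2 * l.length) (w, s)
        (l.foldl (fun _ q => q.2) w, s + chainSum m w l)
  | [], _, w, s => by
    simp only [chainSum, add_zero, List.length_nil, Nat.mul_zero, List.foldl_nil]
    exact rfl
  | (u, v) :: rest, hl, w, s => by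
    have hu := (hl (u, v) (List.mem_cons_self)).1
    have hv := (hl (u, v) (List.mem_cons_self)).2
    have h1 := walkB2 (m := m) hn1 hu hv w s
    have h2 := walkB_chain hn1 rest (fun q hq => hl q (List.mem_cons_of_mem _ hq)) v
      (s + (u ^ m - w ^ m))
    have h3 := walkLen_trans h1 h2
    have hlen : 2 + 2 * rest.length = 2 * ((u,v) :: rest).length := by
      simp [List.length_cons]; ring
    rw [hlen] at h3
    simpa [chainSum, add_assoc] using h3

end Walks

section Sumset
variable {p : ℕ} [Fact p.Prime]

def sumsetL : List (Finset (ZMod p)) → Finset (ZMod p)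
  | [] => {0}
  | S :: rest => S + sumsetL rest

lemma sumsetL_nonempty : ∀ (L : List (Finset (ZMod p))), (∀ S ∈ L, S.Nonempty) →
    (sumsetL L).Nonempty
  | [], _ => ⟨0, by simp [sumsetL]⟩
  | S :: rest, h => by
    have h1 := h S (List.mem_cons_self)
    have h2 := sumsetL_nonempty rest (fun T hT => h T (List.mem_cons_of_mem _ hT))
    exact h1.add h2

lemma sumsetL_card : ∀ (L : List (Finset (ZMod p))), (∀ S ∈ L, S.Nonempty) →
    min p ((L.map fun S => S.card - 1).sum + 1) ≤ (sumsetL L).card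
  | [], _ => by simp [sumsetL]
  | S :: rest, h => by
    have hS := h S (List.mem_cons_self)
    have hrest : ∀ T ∈ rest, T.Nonempty := fun T hT => h T (List.mem_cons_of_mem _ hT)
    have ih := sumsetL_card rest hrest
    have hcd := ZMod.cauchy_davenport (Fact.out : p.Prime) hS (sumsetL_nonempty rest hrest)
    have hS1 : 1 ≤ S.card := hS.card_pos
    have h1 : 1 ≤ (sumsetL rest).card := (sumsetL_nonempty rest hrest).card_pos
    simp only [sumsetL, List.map_cons, List.sum_cons]
    omega

lemma sumsetL_univ (L : List (Finset (ZMod p))) (hne : ∀ S ∈ L, S.Nonempty)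
    (hc : p - 1 ≤ (L.map fun S => S.card - 1).sum) : sumsetL L = univ := by
  have hcard := sumsetL_card L hne
  have hp2 : 2 ≤ p := (Fact.out : p.Prime).two_le
  have hmin : min p ((L.map fun S => S.card - 1).sum + 1) = p := by omega
  rw [hmin] at hcard
  have hle := Finset.card_le_univ (sumsetL L)
  apply Finset.eq_univ_of_card
  rw [ZMod.card] at hle ⊢
  omega

-- nonzero m-th powers
def Mst (p m : ℕ) [Fact p.Prime] : Finset (ZMod p) := (univ.erase 0).image (· ^ m)

lemma card_Mst (hm0 : m ≠ 0) (hmlt : m ≤ p - 2) : 2 ≤ (Mst p m).card := by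
  have hp2 : 2 ≤ p := (Fact.out : p.Prime).two_le
  have hcard : (univ.erase (0 : ZMod p)).card = p - 1 := by
    rw [Finset.card_erase_of_mem (Finset.mem_univ _), Finset.card_univ, ZMod.card]
  have hfib : ∀ y ∈ (univ.erase (0 : ZMod p)).image (· ^ m),
      ((univ.erase (0 : ZMod p)).filter (fun t => t ^ m = y)).card ≤ m := by
    intro y _
    have hsub : (univ.erase (0 : ZMod p)).filter (fun t => t ^ m = y) ⊆
        (Polynomial.nthRoots m y).toFinset := by
      intro t ht
      rw [Finset.mem_filter] at ht
      rw [Multiset.mem_toFinset, Polynomial.mem_nthRoots (Nat.pos_of_ne_zero hm0)]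
      exact ht.2
    calc ((univ.erase (0 : ZMod p)).filter (fun t => t ^ m = y)).card
        ≤ (Polynomial.nthRoots m y).toFinset.card := Finset.card_le_card hsub
      _ ≤ Multiset.card (Polynomial.nthRoots m y) := Multiset.toFinset_card_le _
      _ ≤ m := Polynomial.card_nthRoots m y
  have h2 := Finset.card_le_mul_card_image (s := univ.erase (0 : ZMod p))
    (f := (· ^ m)) m hfib
  rw [hcard] at h2
  by_contra hlt
  push_neg at hlt
  interval_cases hM : (Mst p m).card <;> rw [Mst] at hM <;> rw [hM] at h2 <;> omega

lemma Mst_nonempty (hm0 : m ≠ 0) : (Mst p m).Nonempty := by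
  refine ⟨1, ?_⟩
  rw [Mst, Finset.mem_image]
  exact ⟨1, by simp [Finset.mem_erase], one_pow m⟩

lemma mem_Mst {y : ZMod p} : y ∈ Mst p m ↔ ∃ u : ZMod p, u ≠ 0 ∧ u ^ m = y := by
  simp [Mst, Finset.mem_image, Finset.mem_erase]


end Sumset

section SchemeA
variable {p m n : ℕ} [Fact p.Prime]

lemma coverA (m n : ℕ) (SA : Finset (ZMod p))
    (hSA : ∀ a ∈ SA, ∃ v t : ZMod p, v ^ m - t ^ n = a) :
    ∀ (k : ℕ) (δ : ZMod p), δ ∈ sumsetL (List.replicate k SA) →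
      ∃ l : List (ZMod p × ZMod p), l.length = k ∧
        (l.map fun q => q.1 ^ m - q.2 ^ n).sum = δ
  | 0, δ, hδ => by
    refine ⟨[], rfl, ?_⟩
    simp only [List.replicate, sumsetL, Finset.mem_singleton] at hδ
    simp [hδ.symm]
  | k+1, δ, hδ => by
    rw [List.replicate_succ] at hδ
    simp only [sumsetL] at hδ
    rw [Finset.mem_add] at hδ
    obtain ⟨a, ha, b, hb, hab⟩ := hδ
    obtain ⟨v, t, hvt⟩ := hSA a ha
    obtain ⟨l, hlen, hsum⟩ := coverA m n SA hSA k b hb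
    refine ⟨(v, t) :: l, by simp [hlen], ?_⟩
    simp only [List.map_cons, List.sum_cons, hvt, hsum, hab]

lemma schemeA (hp5 : 5 ≤ p) (hm0 : m ≠ 0) (hn0 : n ≠ 0) (hm2 : m ≤ p - 2) (hn2 : n ≤ p - 2) :
    ∀ x y : ZMod p × ZMod p, ∃ k, k ≤ 2 * p - 2 ∧ walkLen (monomialArc m n) k x y := by
  intro x y
  set M0 : Finset (ZMod p) := univ.image (· ^ m) with hM0def
  set Nneg : Finset (ZMod p) := univ.image (fun t : ZMod p => - t ^ n) with hNdef
  have hM0ne : M0.Nonempty := ⟨1, Finset.mem_image.mpr ⟨1, Finset.mem_univ _, one_pow m⟩⟩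
  have hNne : Nneg.Nonempty := ⟨-(1:ZMod p)^n, Finset.mem_image.mpr ⟨1, Finset.mem_univ _, rfl⟩⟩
  -- cardinalities
  have hMstM : insert (0 : ZMod p) (Mst p m) ⊆ M0 := by
    intro a ha
    rcases Finset.mem_insert.mp ha with h0 | hMem
    · subst h0; exact Finset.mem_image.mpr ⟨0, Finset.mem_univ _, zero_pow hm0⟩
    · obtain ⟨u, _, hu⟩ := mem_Mst.mp hMem
      exact Finset.mem_image.mpr ⟨u, Finset.mem_univ _, hu⟩
  have h0Mst : (0 : ZMod p) ∉ Mst p m := by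
    intro hc
    obtain ⟨u, hu0, hu⟩ := mem_Mst.mp hc
    exact hu0 (pow_eq_zero_iff hm0 |>.mp hu)
  have hcM0 : 3 ≤ M0.card := by
    have h1 := Finset.card_le_card hMstM
    rw [Finset.card_insert_of_notMem h0Mst] at h1
    have h2 := card_Mst hm0 hm2
    omega
  have hcN : 3 ≤ Nneg.card := by
    have himg : Nneg = (insert (0:ZMod p) (Mst p n) ∪ univ.image (· ^ n)).image Neg.neg ∨ True := Or.inr trivial
    have : Nneg = (univ.image (· ^ n)).image (fun a => -a) := by
      rw [hNdef, Finset.image_image]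
      rfl
    rw [this, Finset.card_image_of_injective _ neg_injective]
    have h1 := Finset.card_le_card (show insert (0 : ZMod p) (Mst p n) ⊆ univ.image (· ^ n) by
      intro a ha
      rcases Finset.mem_insert.mp ha with h0 | hMem
      · subst h0; exact Finset.mem_image.mpr ⟨0, Finset.mem_univ _, zero_pow hn0⟩
      · obtain ⟨u, _, hu⟩ := mem_Mst.mp hMem
        exact Finset.mem_image.mpr ⟨u, Finset.mem_univ _, hu⟩)
    have h0Mst' : (0 : ZMod p) ∉ Mst p n := by
      intro hc
      obtain ⟨u, hu0, hu⟩ := mem_Mst.mp hc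
      exact hu0 (pow_eq_zero_iff hn0 |>.mp hu)
    rw [Finset.card_insert_of_notMem h0Mst'] at h1
    have h2 := card_Mst hn0 hn2
    omega
  set SA : Finset (ZMod p) := M0 + Nneg with hSAdef
  have hcSA : 5 ≤ SA.card := by
    have hcd := ZMod.cauchy_davenport (Fact.out : p.Prime) hM0ne hNne
    rw [← hSAdef] at hcd
    omega
  -- choose k
  set k : ℕ := (p + 2) / 4 with hkdef
  have hk1 : p - 1 ≤ 4 * k := by omega
  have hk2 : 4 * k + 2 ≤ 2 * p - 2 := by omega
  -- the sumset is everything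
  have huniv : sumsetL (List.replicate k SA) = univ := by
    apply sumsetL_univ
    · intro S hS
      rw [List.eq_of_mem_replicate hS]
      exact hM0ne.add hNne
    · rw [List.map_replicate, List.sum_replicate, smul_eq_mul]
      calc p - 1 ≤ 4 * k := hk1
        _ ≤ k * (SA.card - 1) := by
          rw [Nat.mul_comm]
          exact Nat.mul_le_mul_left k (by omega)
  -- extract addends
  set δ : ZMod p := y.1 ^ n - y.2 - (x.1 ^ m - x.2) with hδdef
  obtain ⟨l, hlen, hsum⟩ := coverA m n SA
    (by
      intro a ha
      rw [hSAdef, Finset.mem_add] at ha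
      obtain ⟨α, hα, β, hβ, hab⟩ := ha
      obtain ⟨v, _, hv⟩ := Finset.mem_image.mp hα
      obtain ⟨t, _, ht⟩ := Finset.mem_image.mp hβ
      exact ⟨v, t, by rw [← hab, ← hv, ← ht]; ring⟩)
    k δ (by rw [huniv]; exact Finset.mem_univ δ)
  -- build the walk
  have w1 := walkA_start (m := m) (n := n) x.1 x.2
  have w2 := walkA_chain (K := ZMod p) hm0 hn0 l (x.1 ^ m - x.2)
  have w3 := walkA_end (m := m) (n := n) (x.1 ^ m - x.2 + (l.map fun q => q.1 ^ m - q.2 ^ n).sum) y.1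
  have wall := walkLen_trans w1 (walkLen_trans w2 w3)
  rw [hsum] at wall
  have hfix : y.1 ^ n - (x.1 ^ m - x.2 + δ) = y.2 := by rw [hδdef]; ring
  rw [hfix] at wall
  refine ⟨1 + (4 * l.length + 1), by omega, wall⟩

end SchemeA

section SchemeB
variable {p m n : ℕ} [Fact p.Prime]

lemma coverB (m : ℕ) : ∀ (k : ℕ) (w δ b1 : ZMod p), b1 ≠ 0 →
    δ ∈ (Mst p m).image (· - w ^ m) +
      sumsetL (List.replicate k (Mst p m + (Mst p m).image Neg.neg)) →
    ∃ l : List (ZMod p × ZMod p), l.length = k + 1 ∧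
      (∀ q ∈ l, q.1 ≠ 0 ∧ q.2 ≠ 0) ∧
      (∀ z : ZMod p, l.foldl (fun _ q => q.2) z = b1) ∧ chainSum m w l = δ
  | 0, w, δ, b1, hb1, hδ => by
    rw [Finset.mem_add] at hδ
    obtain ⟨s1, hs1, e, he, hse⟩ := hδ
    simp only [List.replicate, sumsetL, Finset.mem_singleton] at he
    obtain ⟨μ, hμ, hμs⟩ := Finset.mem_image.mp hs1
    obtain ⟨u, hu0, hum⟩ := mem_Mst.mp hμ
    refine ⟨[(u, b1)], rfl, ?_, ?_, ?_⟩
    · intro q hq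
      rw [List.mem_singleton] at hq
      rw [hq]
      exact ⟨hu0, hb1⟩
    · intro z; rfl
    · show (u ^ m - w ^ m) + chainSum m b1 [] = δ
      rw [show chainSum m b1 ([] : List (ZMod p × ZMod p)) = 0 from rfl, add_zero,
        ← hse, he, add_zero, ← hμs, hum]
  | k+1, w, δ, b1, hb1, hδ => by
    rw [Finset.mem_add] at hδ
    obtain ⟨s1, hs1, rest, hrest, hse⟩ := hδ
    rw [List.replicate_succ] at hrest
    simp only [sumsetL] at hrest
    rw [Finset.mem_add] at hrest
    obtain ⟨tEl, htEl, δ'', hδ'', hteq⟩ := hrest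
    rw [Finset.mem_add] at htEl
    obtain ⟨μ, hμ, ν', hν', hμν⟩ := htEl
    obtain ⟨ν, hν, hνneg⟩ := Finset.mem_image.mp hν'
    obtain ⟨c, hc0, hcm⟩ := mem_Mst.mp hμ
    obtain ⟨d, hd0, hdm⟩ := mem_Mst.mp hν
    have hs1' : ∃ u : ZMod p, u ≠ 0 ∧ u ^ m - w ^ m = s1 := by
      obtain ⟨μ', hμ', hμs'⟩ := Finset.mem_image.mp hs1
      obtain ⟨u, hu0, hum⟩ := mem_Mst.mp hμ'
      exact ⟨u, hu0, by rw [hum]; exact hμs'⟩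
    obtain ⟨u, hu0, hum⟩ := hs1'
    have hrest' : rest ∈ (Mst p m).image (· - d ^ m) +
        sumsetL (List.replicate k (Mst p m + (Mst p m).image Neg.neg)) := by
      rw [Finset.mem_add]
      refine ⟨tEl, ?_, δ'', hδ'', hteq⟩
      rw [Finset.mem_image]
      refine ⟨μ, hμ, ?_⟩
      rw [← hμν, ← hνneg, hdm]
      ring
    obtain ⟨l', hlen', hnz', hfold', hsum'⟩ := coverB m k d rest b1 hb1 hrest'
    refine ⟨(u, d) :: l', by simp [hlen'], ?_, ?_, ?_⟩
    · intro q hq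
      rcases List.mem_cons.mp hq with h | h
      · rw [h]; exact ⟨hu0, hd0⟩
      · exact hnz' q h
    · intro z
      show l'.foldl (fun _ q => q.2) d = b1
      exact hfold' d
    · show (u ^ m - w ^ m) + chainSum m d l' = δ
      rw [hum, hsum', ← hse]

lemma schemeB (hp5 : 5 ≤ p) (hm0 : m ≠ 0) (hnp : n = p - 1) (hm2 : m ≤ p - 2) :
    ∀ x y : ZMod p × ZMod p, ∃ k, k ≤ 2 * p - 2 ∧ walkLen (monomialArc m n) k x y := by
  intro x y
  have hppr : p.Prime := Fact.out
  have hn0 : n ≠ 0 := by omega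
  have hn1 : ∀ u : ZMod p, u ≠ 0 → u ^ n = 1 := fun u hu => by
    rw [hnp]; exact ZMod.pow_card_sub_one_eq_one hu
  have hodd : p % 2 = 1 := by rcases hppr.eq_two_or_odd with h | h <;> omega
  have hMa := card_Mst (p := p) hm0 hm2
  have hMne := Mst_nonempty (p := p) hm0
  set T : Finset (ZMod p) := Mst p m + (Mst p m).image Neg.neg with hTdef
  have hTne : T.Nonempty := hMne.add (hMne.image _)
  have hTcard : 3 ≤ T.card := by
    have hcd := ZMod.cauchy_davenport hppr hMne (hMne.image Neg.neg)
    rw [Finset.card_image_of_injective _ neg_injective, ← hTdef] at hcd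
    omega
  set k : ℕ := (p - 1) / 2 with hkdef
  have hk1 : 2 * k = p - 1 := by omega
  have huniv : ∀ w : ZMod p, (Mst p m).image (· - w ^ m) + sumsetL (List.replicate k T) =
      univ := by
    intro w
    have := sumsetL_univ (((Mst p m).image (· - w ^ m)) :: List.replicate k T)
      (by
        intro S hS
        rcases List.mem_cons.mp hS with h | h
        · rw [h]; exact hMne.image _
        · rw [List.eq_of_mem_replicate h]; exact hTne)
      (by
        rw [List.map_cons, List.sum_cons, List.map_replicate, List.sum_replicate, smul_eq_mul]
        have : 2 * k ≤ k * (T.card - 1) := by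
          rw [Nat.mul_comm]
          exact Nat.mul_le_mul_left k (by omega)
        omega)
    simpa only [sumsetL] using this
  by_cases hy1 : y.1 = 0
  · -- end at (0, y.2) via (1, -y.2)
    set δ : ZMod p := -y.2 - x.2 with hδdef
    obtain ⟨l, hlen, hnz, hfold, hsum⟩ := coverB m k x.1 δ 1 one_ne_zero
      (by rw [huniv]; exact Finset.mem_univ _)
    have w1 := walkB_chain (K := ZMod p) (m := m) hn1 l hnz x.1 x.2
    rw [hfold x.1, hsum] at w1
    have hfix : x.2 + δ = -y.2 := by rw [hδdef]; ring
    rw [hfix] at w1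
    have w2 : walkLen (monomialArc m n) 1 ((1 : ZMod p), -y.2) (0, y.2) :=
      ⟨(0, y.2), arc_mk (by rw [one_pow, zero_pow hn0]; ring), rfl⟩
    have wall := walkLen_trans w1 w2
    have hyeq : ((0 : ZMod p), y.2) = y := by
      rw [← hy1]
    rw [hyeq] at wall
    exact ⟨2 * l.length + 1, by rw [hlen]; omega, wall⟩
  · set δ : ZMod p := y.2 - x.2 with hδdef
    obtain ⟨l, hlen, hnz, hfold, hsum⟩ := coverB m k x.1 δ y.1 hy1
      (by rw [huniv]; exact Finset.mem_univ _)
    have w1 := walkB_chain (K := ZMod p) (m := m) hn1 l hnz x.1 x.2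
    rw [hfold x.1, hsum] at w1
    have hfix : x.2 + δ = y.2 := by rw [hδdef]; ring
    rw [hfix] at w1
    exact ⟨2 * l.length, by rw [hlen]; omega, w1⟩

end SchemeB

lemma p3walks11 : ∀ x y : ZMod 3 × ZMod 3,
    walkLen (monomialArc 1 1) 0 x y ∨ walkLen (monomialArc 1 1) 1 x y ∨
    walkLen (monomialArc 1 1) 2 x y ∨ walkLen (monomialArc 1 1) 3 x y := by decide

lemma p3walks12 : ∀ x y : ZMod 3 × ZMod 3,
    walkLen (monomialArc 1 2) 0 x y ∨ walkLen (monomialArc 1 2) 1 x y ∨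
    walkLen (monomialArc 1 2) 2 x y ∨ walkLen (monomialArc 1 2) 3 x y := by decide

lemma reach (p m n : ℕ) [Fact p.Prime] (hm : 1 ≤ m) (hmn : m ≤ n) (hn : n ≤ p - 1)
    (h : m ≠ p - 1 ∨ n ≠ p - 1) :
    ∀ x y : ZMod p × ZMod p, ∃ k, k ≤ 2 * p - 2 ∧ walkLen (monomialArc m n) k x y := by
  have hppr : p.Prime := Fact.out
  have hp2 := hppr.two_le
  have hm0 : m ≠ 0 := by omega
  rcases eq_or_ne p 2 with h2 | h2
  · exfalso; subst h2; rcases h with h | h <;> omega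
  rcases eq_or_ne p 3 with h3 | h3
  · subst h3
    intro x y
    have hcases : (m = 1 ∧ n = 1) ∨ (m = 1 ∧ n = 2) := by
      rcases h with h | h <;> omega
    rcases hcases with ⟨hm1, hn1⟩ | ⟨hm1, hn1⟩ <;> subst hm1 <;> subst hn1
    · rcases p3walks11 x y with hw | hw | hw | hw
      exacts [⟨0, by omega, hw⟩, ⟨1, by omega, hw⟩, ⟨2, by omega, hw⟩, ⟨3, by omega, hw⟩]
    · rcases p3walks12 x y with hw | hw | hw | hw
      exacts [⟨0, by omega, hw⟩, ⟨1, by omega, hw⟩, ⟨2, by omega, hw⟩, ⟨3, by omega, hw⟩]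
  · have hp4 : p ≠ 4 := by
      intro h4
      rw [h4] at hppr
      exact absurd hppr (by decide)
    have hp5 : 5 ≤ p := by omega
    rcases eq_or_ne n (p - 1) with hnp | hnp
    · have hmlt : m ≤ p - 2 := by rcases h with h | h <;> omega
      exact schemeB hp5 hm0 hnp hmlt
    · have hn2 : n ≤ p - 2 := by omega
      exact schemeA hp5 hm0 (by omega) (by omega) hn2


theorem diam_le_two_p_sub_two {p m n : ℕ} (hp : p.Prime)
    (F : Type*) [Field F] [Fintype F] (hF : Fintype.card F = p)
    (hm : 1 ≤ m) (hmn : m ≤ n) (hn : n ≤ p - 1)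
    (h : m ≠ p - 1 ∨ n ≠ p - 1) :
    ddiam (monomialArc (F := F) m n) ≤ ((2 * p - 2 : ℕ) : ℕ∞) := by
  haveI := Fact.mk hp
  apply ddiam_le
  intro x y
  let e : ZMod p ≃+* F := ZMod.ringEquivOfPrime F hp hF
  obtain ⟨k, hk, hw⟩ := reach p m n hm hmn hn h (e.symm x.1, e.symm x.2) (e.symm y.1, e.symm y.2)
  refine ⟨k, hk, ?_⟩
  have hmap := walk_map e m n k _ _ hw
  simpa using hmap
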